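/- arXiv:1108.2715 — 2 statements merged into one kernel-verified Lean document; each statement's English description precedes it below -/
import Mathlib

section
/- For any real numbers f(u), g(u) (i.e., with φ(u) = e(f(u) − g(u)) where e(t) = exp(2πit)), if |f'(u) − g'(u)| ≤ Δ for all u in [A,B], then |Σ_{A < n ≤ B} aₙ e(f(n))| ≤ (1 + 2π·(B − A)·Δ) · max_{A ≤ u ≤ B} |Σ_{A < n ≤ u} aₙ e(g(n))|. -/
open Set Finset Real

/-- `e t = exp(2πit)`. -/
noncomputable def e (t : ℝ) : ℂ := Complex.exp (2 * Real.pi * Complex.I * t)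

lemma sum_Ioc_int (F : ℤ → ℂ) (m : ℤ) (K : ℕ) :
    ∑ n ∈ Finset.Ioc m (m + K), F n = ∑ i ∈ Finset.range K, F (m + 1 + i) := by
  induction K with
  | zero => simp
  | succ k ih =>
    have h1 : (m + ((k : ℕ) + 1 : ℕ) : ℤ) = (m + k) + 1 := by push_cast; ring
    rw [Finset.sum_range_succ, ← ih, h1]
    have h2 : Finset.Ioc m (m + k + 1) = insert (m + k + 1) (Finset.Ioc m (m + k)) := by
      ext x; simp [Finset.mem_Ioc]; omega
    have h3 : (m + 1 + (k : ℤ)) = m + k + 1 := by ring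
    rw [h2, Finset.sum_insert (by simp), h3, add_comm]

lemma e_split (x y : ℝ) : e x = e (x - y) * e y := by
  simp only [e, ← Complex.exp_add]
  congr 1
  push_cast; ring

/-- If `f, g` are continuously differentiable on `[A, B]` with
`|f'(u) − g'(u)| ≤ Δ` on `[A, B]`, and every partial sum `∑_{A < n ≤ u} aₙ e(g(n))` is
bounded by `M` in modulus, then
`|∑_{A < n ≤ B} aₙ e(f(n))| ≤ (1 + 2π (B − A) Δ) * M`. -/
theorem stmt7 (A B : ℝ) (hAB : A < B) (a : ℤ → ℂ) (f g : ℝ → ℝ) (Δ : ℝ)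
    (hf : ContDiffOn ℝ 1 f (Icc A B)) (hg : ContDiffOn ℝ 1 g (Icc A B))
    (hΔ : ∀ u ∈ Icc A B, |derivWithin f (Icc A B) u - derivWithin g (Icc A B) u| ≤ Δ)
    (M : ℝ)
    (hS : ∀ u ∈ Icc A B, ‖∑ n ∈ Finset.Ioc ⌊A⌋ ⌊u⌋, a n * e (g n)‖ ≤ M) :
    ‖∑ n ∈ Finset.Ioc ⌊A⌋ ⌊B⌋, a n * e (f n)‖ ≤
      (1 + 2 * Real.pi * (B - A) * Δ) * M := by
  have hA : A ∈ Icc A B := ⟨le_refl A, hAB.le⟩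
  have hM : 0 ≤ M := by simpa using hS A hA
  have hΔ0 : 0 ≤ Δ := (abs_nonneg _).trans (hΔ A hA)
  have hπ := Real.pi_pos
  have hRHS : 0 ≤ 1 + 2 * Real.pi * (B - A) * Δ := by
    nlinarith [mul_nonneg (mul_nonneg (by positivity : (0:ℝ) ≤ 2 * Real.pi)
      (sub_nonneg.2 hAB.le)) hΔ0]
  by_cases hmN : ⌊B⌋ ≤ ⌊A⌋
  · rw [Finset.Ioc_eq_empty (by omega)]
    simpa using mul_nonneg hRHS hM
  push_neg at hmN
  set m := ⌊A⌋ with hm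
  set N := ⌊B⌋ with hN
  set K : ℕ := (N - m).toNat with hKdef
  have hKZ : (K : ℤ) = N - m := Int.toNat_of_nonneg (by omega)
  have hK1 : 1 ≤ K := by omega
  have hAm : A < (m : ℝ) + 1 := Int.lt_floor_add_one A
  have hNB : ((N : ℤ) : ℝ) ≤ B := Int.floor_le B
  have hmem : ∀ n : ℤ, m + 1 ≤ n → n ≤ N → ((n : ℝ) ∈ Icc A B) := by
    intro n h1 h2
    have e1 : ((m : ℝ)) + 1 ≤ (n : ℝ) := by exact_mod_cast h1
    have e2 : (n : ℝ) ≤ (N : ℝ) := by exact_mod_cast h2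
    exact ⟨by linarith, by linarith⟩
  -- partial sums bounded
  set b : ℤ → ℂ := fun n => a n * e (g n) with hb
  have hSbound : ∀ j : ℕ, j ≤ K → ‖∑ i ∈ Finset.range j, b (m + 1 + i)‖ ≤ M := by
    intro j hj
    rcases Nat.eq_zero_or_pos j with h0 | h0
    · simpa [h0] using hM
    have hmemj : ((m + j : ℤ) : ℝ) ∈ Icc A B := hmem _ (by omega) (by omega)
    have h := hS ((m + j : ℤ) : ℝ) hmemj
    rw [Int.floor_intCast] at h
    rw [← sum_Ioc_int b m j]
    exact h
  -- the phase function
  set φ : ℝ → ℂ := fun u => e (f u - g u) with hφ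
  have hφnorm : ∀ u : ℝ, ‖φ u‖ = 1 := by
    intro u
    have : (2 * (Real.pi : ℂ) * Complex.I * ((f u - g u : ℝ) : ℂ))
        = ((2 * Real.pi * (f u - g u) : ℝ) : ℂ) * Complex.I := by push_cast; ring
    simp only [hφ, e, this, Complex.norm_exp_ofReal_mul_I]
  have hder : ∀ x ∈ Icc A B, HasDerivWithinAt φ
      (Complex.exp (2 * (Real.pi : ℂ) * Complex.I * ((f x - g x : ℝ) : ℂ)) *
        (2 * (Real.pi : ℂ) * Complex.I *
          ((derivWithin f (Icc A B) x - derivWithin g (Icc A B) x : ℝ) : ℂ))) (Icc A B) x := by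
    intro x hx
    have hfd : HasDerivWithinAt f (derivWithin f (Icc A B) x) (Icc A B) x :=
      (hf.differentiableOn one_ne_zero x hx).hasDerivWithinAt
    have hgd : HasDerivWithinAt g (derivWithin g (Icc A B) x) (Icc A B) x :=
      (hg.differentiableOn one_ne_zero x hx).hasDerivWithinAt
    have hsub := hfd.sub hgd
    have hofReal : HasDerivWithinAt (fun u => ((f u - g u : ℝ) : ℂ))
        ((derivWithin f (Icc A B) x - derivWithin g (Icc A B) x : ℝ) : ℂ) (Icc A B) x := by
      have h' := (Complex.ofRealCLM.hasDerivAt (x := f x - g x)).scomp_hasDerivWithinAt x hsub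
      convert h' using 1
      · rfl
      · rfl
      · simp [Complex.real_smul]
    have hmul := hofReal.const_mul (2 * (Real.pi : ℂ) * Complex.I)
    exact hmul.cexp
  have hderbound : ∀ x ∈ Icc A B,
      ‖Complex.exp (2 * (Real.pi : ℂ) * Complex.I * ((f x - g x : ℝ) : ℂ)) *
        (2 * (Real.pi : ℂ) * Complex.I *
          ((derivWithin f (Icc A B) x - derivWithin g (Icc A B) x : ℝ) : ℂ))‖
      ≤ 2 * Real.pi * Δ := by
    intro x hx
    have h1 : ‖Complex.exp (2 * (Real.pi : ℂ) * Complex.I * ((f x - g x : ℝ) : ℂ))‖ = 1 :=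
      hφnorm x
    rw [norm_mul, h1, one_mul, norm_mul]
    have h2 : ‖(2 * (Real.pi : ℂ) * Complex.I)‖ = 2 * Real.pi := by
      simp [norm_mul, Real.pi_nonneg, abs_of_nonneg]
    rw [h2]
    have h3 : ‖((derivWithin f (Icc A B) x - derivWithin g (Icc A B) x : ℝ) : ℂ)‖
        = |derivWithin f (Icc A B) x - derivWithin g (Icc A B) x| := by
      rw [Complex.norm_real, Real.norm_eq_abs]
    rw [h3]
    exact mul_le_mul_of_nonneg_left (hΔ x hx) (by positivity)
  have hLip : ∀ x ∈ Icc A B, ∀ y ∈ Icc A B, ‖φ y - φ x‖ ≤ (2 * Real.pi * Δ) * ‖y - x‖ :=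
    fun x hx y hy =>
      (convex_Icc A B).norm_image_sub_le_of_norm_hasDerivWithin_le hder hderbound hx hy
  -- rewrite the sum
  have hmK : m + (K : ℤ) = N := by omega
  have hsum1 : ∑ n ∈ Finset.Ioc m N, a n * e (f n)
      = ∑ i ∈ Finset.range K, φ ((m + 1 + i : ℤ) : ℝ) • b (m + 1 + i) := by
    rw [← hmK, sum_Ioc_int (fun n => a n * e (f n)) m K]
    refine Finset.sum_congr rfl fun i _ => ?_
    rw [smul_eq_mul, hb, hφ]
    rw [e_split (f ((m + 1 + i : ℤ) : ℝ)) (g ((m + 1 + i : ℤ) : ℝ))]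
    ring
  set ψ : ℕ → ℂ := fun i => φ ((m + 1 + i : ℤ) : ℝ) with hψ
  set c : ℕ → ℂ := fun i => b (m + 1 + i) with hc
  have hparts := Finset.sum_range_by_parts ψ c K
  rw [hsum1, hparts]
  have hGK : ‖∑ i ∈ Finset.range K, c i‖ ≤ M := hSbound K le_rfl
  have hψnorm : ∀ i, ‖ψ i‖ = 1 := fun i => hφnorm _
  have hψdiff : ∀ i ∈ Finset.range (K - 1), ‖ψ (i + 1) - ψ i‖ ≤ 2 * Real.pi * Δ := by
    intro i hi
    rw [Finset.mem_range] at hi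
    have hx : ((m + 1 + i : ℤ) : ℝ) ∈ Icc A B := hmem _ (by omega) (by omega)
    have hy : ((m + 1 + (i + 1 : ℕ) : ℤ) : ℝ) ∈ Icc A B := hmem _ (by omega) (by omega)
    have := hLip _ hx _ hy
    have hdist : ‖((m + 1 + (i + 1 : ℕ) : ℤ) : ℝ) - ((m + 1 + i : ℤ) : ℝ)‖ = 1 := by
      have hd : ((m + 1 + (i + 1 : ℕ) : ℤ) : ℝ) - ((m + 1 + i : ℤ) : ℝ) = 1 := by
        push_cast; ring
      rw [hd, norm_one]
    rw [hdist, mul_one] at this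
    exact this
  calc ‖ψ (K - 1) • ∑ i ∈ Finset.range K, c i -
          ∑ i ∈ Finset.range (K - 1), (ψ (i + 1) - ψ i) • ∑ j ∈ Finset.range (i + 1), c j‖
      ≤ ‖ψ (K - 1) • ∑ i ∈ Finset.range K, c i‖ +
          ‖∑ i ∈ Finset.range (K - 1), (ψ (i + 1) - ψ i) • ∑ j ∈ Finset.range (i + 1), c j‖ :=
        norm_sub_le _ _
    _ ≤ M + (K - 1 : ℕ) * (2 * Real.pi * Δ * M) := by
        gcongr
        · rw [norm_smul, hψnorm, one_mul]; exact hGK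
        · calc ‖∑ i ∈ Finset.range (K - 1), (ψ (i + 1) - ψ i) • ∑ j ∈ Finset.range (i + 1), c j‖
              ≤ ∑ i ∈ Finset.range (K - 1), ‖(ψ (i + 1) - ψ i) • ∑ j ∈ Finset.range (i + 1), c j‖ :=
                norm_sum_le _ _
            _ ≤ ∑ i ∈ Finset.range (K - 1), 2 * Real.pi * Δ * M := by
                refine Finset.sum_le_sum fun i hi => ?_
                rw [norm_smul]
                have h1 := hψdiff i hi
                have h2 : ‖∑ j ∈ Finset.range (i + 1), c j‖ ≤ M := by
                  refine hSbound (i + 1) ?_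
                  rw [Finset.mem_range] at hi; omega
                have := mul_le_mul h1 h2 (norm_nonneg _) (by positivity)
                linarith
            _ = (K - 1 : ℕ) * (2 * Real.pi * Δ * M) := by
                rw [Finset.sum_const, Finset.card_range, nsmul_eq_mul]
    _ ≤ M + (B - A) * (2 * Real.pi * Δ * M) := by
        gcongr M + ?_
        have hcast : ((K - 1 : ℕ) : ℝ) ≤ B - A := by
          have : ((K - 1 : ℕ) : ℤ) = N - m - 1 := by omega
          have h4 : (((K - 1 : ℕ) : ℤ) : ℝ) = (N : ℝ) - (m : ℝ) - 1 := by
            rw [this]; push_cast; ring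
          rw [Int.cast_natCast] at h4
          rw [h4]; linarith
        have hpos : 0 ≤ 2 * Real.pi * Δ * M := by positivity
        exact mul_le_mul_of_nonneg_right hcast hpos
    _ = (1 + 2 * Real.pi * (B - A) * Δ) * M := by ring
end

section
/- Let F(s) = Σ aₙ n^{−s} be absolutely convergent for Re s > 1 with multiplicative coefficients aₙ and a₁ = 1, and let χ be a Dirichlet character mod q and d ∈ ℕ. Then for Re s > 1, Σ_{n=1}^∞ a_{dn} χ(n) n^{−s} = G_d(s,χ)·F(s,χ), where F(s,χ) = Σ aₙ χ(n) n^{−s} and G_d(s,χ) = ∏_{p | d} (Σ_{k≥0} a_{p^{α(p)+k}} χ(p)^k p^{−ks}) / (Σ_{k≥0} a_{p^k} χ(p)^k p^{−ks}), with d = ∏_{p|d} p^{α(p)} the prime factorization of d. -/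
open Finset

private lemma stmt10_cpow (p : ℕ) (k : ℕ) (z : ℂ) :
    ((p ^ k : ℕ) : ℂ) ^ z = (p : ℂ) ^ ((k : ℂ) * z) := by
  push_cast
  rw [← Complex.cpow_natCast (p : ℂ) k, ← Complex.cpow_mul]
  · have : (Complex.log (p : ℂ) * (k : ℂ)).im = 0 := by
      simp [Complex.mul_im, Complex.log_im]
    rw [this]; linarith [Real.pi_pos]
  · have : (Complex.log (p : ℂ) * (k : ℂ)).im = 0 := by
      simp [Complex.mul_im, Complex.log_im]
    rw [this]; linarith [Real.pi_pos]

private def stmt10_equiv (p : ℕ) (hp : p.Prime) (Q : Finset ℕ)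
    (hQ : ∀ r ∈ Q, r.Prime ∧ r ≠ p) :
    ℕ × {v : ℕ // 0 < v ∧ ∀ r ∈ insert p Q, ¬ r ∣ v} ≃ {u : ℕ // 0 < u ∧ ∀ r ∈ Q, ¬ r ∣ u} where
  toFun x := ⟨p ^ x.1 * x.2.1, by
    obtain ⟨k, v, hv0, hv⟩ := x
    refine ⟨by have := hp.pos; positivity, fun r hr hdvd => ?_⟩
    rcases (hQ r hr).1.dvd_mul.mp hdvd with h | h
    · exact (hQ r hr).2 ((Nat.prime_dvd_prime_iff_eq (hQ r hr).1 hp).mp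
        ((hQ r hr).1.dvd_of_dvd_pow h))
    · exact hv r (Finset.mem_insert_of_mem hr) h⟩
  invFun u := ⟨u.1.factorization p, ordCompl[p] u.1, Nat.ordCompl_pos p u.2.1.ne', by
    intro r hr
    rcases Finset.mem_insert.mp hr with rfl | hr
    · exact Nat.not_dvd_ordCompl hp u.2.1.ne'
    · exact fun h => u.2.2 r hr (h.trans (Nat.ordCompl_dvd u.1 p))⟩
  left_inv := by
    rintro ⟨k, v, hv0, hv⟩
    have hpv : ¬ p ∣ v := hv p (Finset.mem_insert_self p Q)
    have hfac : (p ^ k * v).factorization p = k := by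
      rw [Nat.factorization_mul (pow_ne_zero k hp.ne_zero) hv0.ne']
      simp [hp.factorization_pow, Nat.factorization_eq_zero_of_not_dvd hpv]
    simp only [Prod.mk.injEq, Subtype.mk.injEq]
    refine ⟨hfac, ?_⟩
    rw [hfac]
    exact Nat.mul_div_cancel_left v (pow_pos hp.pos k)
  right_inv := by
    rintro ⟨u, hu0, hu⟩
    simp only [Subtype.mk.injEq]
    exact Nat.ordProj_mul_ordCompl_eq_self u p

private lemma stmt10_summable (a : ℕ → ℂ) (ha1 : a 1 = 1)
    (hgrowth : ∀ ε : ℝ, 0 < ε → ∃ C : ℝ, ∀ n : ℕ, 1 ≤ n → ‖a n‖ ≤ C * (n : ℝ) ^ ε)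
    (q : ℕ) (χ : DirichletCharacter ℂ q) (s : ℂ) (hs : 1 < s.re)
    (d : ℕ) (hd : 0 < d) :
    Summable (fun n : ℕ => ‖a (d * n) * χ (n : ZMod q) * (n : ℂ) ^ (-s)‖) := by
  set ε : ℝ := (s.re - 1) / 2 with hεdef
  have hε0 : 0 < ε := by rw [hεdef]; linarith
  obtain ⟨C, hC⟩ := hgrowth ε hε0
  have hC0 : 0 ≤ C := le_trans (norm_nonneg (a 1)) (by simpa [ha1] using hC 1 le_rfl)
  have hmaj : Summable (fun n : ℕ => C * (d : ℝ) ^ ε * (n : ℝ) ^ (ε - s.re)) := by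
    apply Summable.mul_left
    exact Real.summable_nat_rpow.mpr (by rw [hεdef]; linarith)
  refine hmaj.of_nonneg_of_le (fun n => norm_nonneg _) (fun n => ?_)
  rcases Nat.eq_zero_or_pos n with rfl | hn
  · have hns : -s ≠ 0 := by
      intro h
      rw [neg_eq_zero] at h
      rw [h] at hs; norm_num at hs
    simp [Complex.zero_cpow hns, Real.zero_rpow (by rw [hεdef]; intro h; linarith : ε - s.re ≠ 0)]
  · have hnorm : ‖(n : ℂ) ^ (-s)‖ = (n : ℝ) ^ (-s.re) := by
      rw [Complex.norm_natCast_cpow_of_pos hn, Complex.neg_re]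
    have hη : ‖χ (n : ZMod q)‖ ≤ 1 := DirichletCharacter.norm_le_one χ _
    have hA : ‖a (d * n)‖ ≤ C * ((d : ℝ) ^ ε * (n : ℝ) ^ ε) := by
      have := hC (d * n) (Nat.one_le_iff_ne_zero.mpr (by positivity))
      rwa [Nat.cast_mul, Real.mul_rpow (by positivity) (by positivity)] at this
    calc ‖a (d * n) * χ (n : ZMod q) * (n : ℂ) ^ (-s)‖
        = ‖a (d * n)‖ * ‖χ (n : ZMod q)‖ * ‖(n : ℂ) ^ (-s)‖ := by
          rw [norm_mul, norm_mul]
      _ ≤ (C * ((d : ℝ) ^ ε * (n : ℝ) ^ ε)) * 1 * (n : ℝ) ^ (-s.re) := by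
          rw [hnorm]; gcongr <;> positivity
      _ = C * (d : ℝ) ^ ε * (n : ℝ) ^ (ε - s.re) := by
          rw [mul_one, sub_eq_add_neg, Real.rpow_add (by exact_mod_cast hn)]
          ring

private lemma stmt10_split (a : ℕ → ℂ)
    (hmul : ∀ m n : ℕ, Nat.gcd m n = 1 → a (m * n) = a m * a n)
    (q : ℕ) (χ : DirichletCharacter ℂ q) (s : ℂ)
    (p : ℕ) (hp : p.Prime) (e : ℕ) (hpe : ¬ p ∣ e)
    (α k v : ℕ) (hpv : ¬ p ∣ v) :
    a ((p ^ α * e) * (p ^ k * v)) * χ ((p ^ k * v : ℕ) : ZMod q) *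
        ((p ^ k * v : ℕ) : ℂ) ^ (-s)
    = (a (p ^ (α + k)) * χ (p : ZMod q) ^ k * (p : ℂ) ^ (-(k : ℂ) * s)) *
      (a (e * v) * χ (v : ZMod q) * (v : ℂ) ^ (-s)) := by
  have hpev : ¬ p ∣ e * v := fun hd => ((Nat.Prime.dvd_mul hp).mp hd).elim hpe hpv
  have hcop : Nat.gcd (p ^ (α + k)) (e * v) = 1 :=
    Nat.Coprime.pow_left _ ((Nat.Prime.coprime_iff_not_dvd hp).mpr hpev)
  have h1 : (p ^ α * e) * (p ^ k * v) = p ^ (α + k) * (e * v) := by rw [pow_add]; ring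
  have hcpow : ((p ^ k * v : ℕ) : ℂ) ^ (-s) = (p : ℂ) ^ (-(k : ℂ) * s) * (v : ℂ) ^ (-s) := by
    have hcast : ((p ^ k * v : ℕ) : ℂ) = (((p ^ k : ℕ) : ℝ) : ℂ) * (((v : ℕ) : ℝ) : ℂ) := by
      push_cast; ring
    rw [hcast, Complex.mul_cpow_ofReal_nonneg (by positivity) (by positivity),
      Complex.ofReal_natCast, Complex.ofReal_natCast, stmt10_cpow,
      show (k : ℂ) * (-s) = -(k : ℂ) * s by ring]
  have hχ : χ ((p ^ k * v : ℕ) : ZMod q) = χ ((p : ZMod q)) ^ k * χ ((v : ℕ) : ZMod q) := by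
    push_cast
    rw [map_mul, map_pow]
  rw [h1, hmul _ _ hcop, hχ, hcpow]
  ring

private lemma stmt10_Aterm (a : ℕ → ℂ) (q : ℕ) (χ : DirichletCharacter ℂ q) (s : ℂ)
    (p : ℕ) (α k : ℕ) :
    a (p ^ (α + k)) * χ (p : ZMod q) ^ k * (p : ℂ) ^ (-(k : ℂ) * s)
    = a (p ^ α * p ^ k) * χ ((p ^ k : ℕ) : ZMod q) * ((p ^ k : ℕ) : ℂ) ^ (-s) := by
  rw [← pow_add, stmt10_cpow, show (k : ℂ) * (-s) = -(k : ℂ) * s by ring]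
  push_cast
  rw [map_pow]

private lemma stmt10_key (a : ℕ → ℂ) (ha1 : a 1 = 1)
    (hmul : ∀ m n : ℕ, Nat.gcd m n = 1 → a (m * n) = a m * a n)
    (hgrowth : ∀ ε : ℝ, 0 < ε → ∃ C : ℝ, ∀ n : ℕ, 1 ≤ n → ‖a n‖ ≤ C * (n : ℝ) ^ ε)
    (q : ℕ) (χ : DirichletCharacter ℂ q) (s : ℂ) (hs : 1 < s.re)
    (P : Finset ℕ) :
    ∀ (Q : Finset ℕ), (∀ p ∈ P, p.Prime) → (∀ r ∈ Q, r.Prime) → Disjoint P Q →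
    ∀ d : ℕ, 0 < d → d.primeFactors ⊆ P →
    ∑' u : {u : ℕ // 0 < u ∧ ∀ r ∈ Q, ¬ r ∣ u},
        a (d * (u : ℕ)) * χ ((u : ℕ) : ZMod q) * ((u : ℕ) : ℂ) ^ (-s)
      = (∏ p ∈ P, ∑' k : ℕ, a (p ^ (d.factorization p + k)) * χ (p : ZMod q) ^ k *
            (p : ℂ) ^ (-(k : ℂ) * s)) *
        ∑' u : {u : ℕ // 0 < u ∧ ∀ r ∈ P ∪ Q, ¬ r ∣ u},
          a (u : ℕ) * χ ((u : ℕ) : ZMod q) * ((u : ℕ) : ℂ) ^ (-s) := by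
  induction P using Finset.induction_on with
  | empty =>
    intro Q _ _ _ d hd hsub
    have hd1 : d = 1 := by
      rcases Nat.primeFactors_eq_empty.mp (Finset.subset_empty.mp hsub) with h | h
      · omega
      · exact h
    subst hd1
    rw [Finset.empty_union, Finset.prod_empty, one_mul]
    simp only [one_mul]
  | @insert p P' hpP' IH =>
    intro Q hP hQ hdisj d hd hsub
    have hp : p.Prime := hP p (Finset.mem_insert_self p P')
    have hP'p : ∀ r ∈ P', r.Prime := fun r hr => hP r (Finset.mem_insert_of_mem hr)
    have hpQ : p ∉ Q := Finset.disjoint_left.mp hdisj (Finset.mem_insert_self p P')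
    have hd0 : d ≠ 0 := hd.ne'
    set α := d.factorization p with hα
    set e := ordCompl[p] d with he
    have hde : p ^ α * e = d := Nat.ordProj_mul_ordCompl_eq_self d p
    have hpe : ¬ p ∣ e := Nat.not_dvd_ordCompl hp hd0
    have he0 : 0 < e := Nat.ordCompl_pos p hd0
    have hePF : e.primeFactors ⊆ P' := by
      intro r hr
      have hre : r ∣ e := Nat.dvd_of_mem_primeFactors hr
      have hrd : r ∈ d.primeFactors :=
        Nat.mem_primeFactors.mpr ⟨Nat.prime_of_mem_primeFactors hr,
          hre.trans (Nat.ordCompl_dvd d p), hd0⟩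
      rcases Finset.mem_insert.mp (hsub hrd) with rfl | h
      · exact absurd hre hpe
      · exact h
    have hQ' : ∀ r ∈ insert p Q, r.Prime := by
      intro r hr
      rcases Finset.mem_insert.mp hr with rfl | h
      · exact hp
      · exact hQ r h
    have hdisj' : Disjoint P' (insert p Q) := by
      rw [Finset.disjoint_insert_right]
      exact ⟨hpP', (Finset.disjoint_insert_left.mp hdisj).2⟩
    have hfe : ∀ r ∈ P', e.factorization r = d.factorization r := by
      intro r hr
      rw [he, Nat.factorization_ordCompl]
      exact Finsupp.erase_ne (fun h => hpP' (h ▸ hr))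
    set E := stmt10_equiv p hp Q (fun r hr => ⟨hQ r hr, fun h => hpQ (h ▸ hr)⟩) with hE
    have hsumA : Summable (fun k : ℕ =>
        ‖a (p ^ (α + k)) * χ (p : ZMod q) ^ k * (p : ℂ) ^ (-(k : ℂ) * s)‖) := by
      have h1 := (stmt10_summable a ha1 hgrowth q χ s hs (p ^ α)
        (pow_pos hp.pos α)).comp_injective (Nat.pow_right_injective hp.two_le)
      refine h1.congr fun k => ?_
      exact congrArg norm (stmt10_Aterm a q χ s p α k).symm
    have hsumB : Summable (fun v : {v : ℕ // 0 < v ∧ ∀ r ∈ insert p Q, ¬ r ∣ v} =>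
        ‖a (e * (v : ℕ)) * χ ((v : ℕ) : ZMod q) * ((v : ℕ) : ℂ) ^ (-s)‖) :=
      (stmt10_summable a ha1 hgrowth q χ s hs e he0).subtype
        {v : ℕ | 0 < v ∧ ∀ r ∈ insert p Q, ¬ r ∣ v}
    calc ∑' u : {u : ℕ // 0 < u ∧ ∀ r ∈ Q, ¬ r ∣ u},
          a (d * (u : ℕ)) * χ ((u : ℕ) : ZMod q) * ((u : ℕ) : ℂ) ^ (-s)
        = ∑' x : ℕ × {v : ℕ // 0 < v ∧ ∀ r ∈ insert p Q, ¬ r ∣ v},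
            a (d * ((E x : ℕ))) * χ ((E x : ℕ) : ZMod q) * ((E x : ℕ) : ℂ) ^ (-s) :=
          (E.tsum_eq _).symm
      _ = ∑' x : ℕ × {v : ℕ // 0 < v ∧ ∀ r ∈ insert p Q, ¬ r ∣ v},
            (a (p ^ (α + x.1)) * χ (p : ZMod q) ^ x.1 * (p : ℂ) ^ (-(x.1 : ℂ) * s)) *
            (a (e * (x.2 : ℕ)) * χ ((x.2 : ℕ) : ZMod q) * ((x.2 : ℕ) : ℂ) ^ (-s)) := by
          refine tsum_congr fun x => ?_
          obtain ⟨k, v⟩ := x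
          have hEx : (E (k, v) : ℕ) = p ^ k * (v : ℕ) := rfl
          rw [hEx, ← hde]
          exact stmt10_split a hmul q χ s p hp e hpe α k v
            (v.2.2 p (Finset.mem_insert_self p Q))
      _ = (∑' k : ℕ, a (p ^ (α + k)) * χ (p : ZMod q) ^ k * (p : ℂ) ^ (-(k : ℂ) * s)) *
          (∑' v : {v : ℕ // 0 < v ∧ ∀ r ∈ insert p Q, ¬ r ∣ v},
            a (e * (v : ℕ)) * χ ((v : ℕ) : ZMod q) * ((v : ℕ) : ℂ) ^ (-s)) :=
          (tsum_mul_tsum_of_summable_norm hsumA hsumB).symm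
      _ = (∑' k : ℕ, a (p ^ (α + k)) * χ (p : ZMod q) ^ k * (p : ℂ) ^ (-(k : ℂ) * s)) *
          ((∏ r ∈ P', ∑' k : ℕ, a (r ^ (e.factorization r + k)) * χ (r : ZMod q) ^ k *
              (r : ℂ) ^ (-(k : ℂ) * s)) *
            ∑' u : {u : ℕ // 0 < u ∧ ∀ r ∈ P' ∪ insert p Q, ¬ r ∣ u},
              a (u : ℕ) * χ ((u : ℕ) : ZMod q) * ((u : ℕ) : ℂ) ^ (-s)) := by
          rw [IH (insert p Q) hP'p hQ' hdisj' e he0 hePF]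
      _ = (∏ r ∈ insert p P', ∑' k : ℕ, a (r ^ (d.factorization r + k)) * χ (r : ZMod q) ^ k *
              (r : ℂ) ^ (-(k : ℂ) * s)) *
            ∑' u : {u : ℕ // 0 < u ∧ ∀ r ∈ insert p P' ∪ Q, ¬ r ∣ u},
              a (u : ℕ) * χ ((u : ℕ) : ZMod q) * ((u : ℕ) : ℂ) ^ (-s) := by
          rw [Finset.prod_insert hpP', ← hα,
            Finset.prod_congr rfl (fun r hr => by rw [hfe r hr]),
            show P' ∪ insert p Q = insert p P' ∪ Q by
              rw [Finset.union_insert, Finset.insert_union],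
            mul_assoc]

/-- For multiplicative coefficients `aₙ` with `a₁ = 1` satisfying
`aₙ ≪_ε n^ε` (so all series below converge absolutely for `Re s > 1`), a Dirichlet
character `χ` mod `q`, and `d ∈ ℕ` with `d ≥ 1`: for `Re s > 1`,
`∑ₙ a_{dn} χ(n) n^{−s} = G_d(s, χ) · F(s, χ)`, where `F(s, χ) = ∑ₙ aₙ χ(n) n^{−s}` and
`G_d(s, χ) = ∏_{p ∣ d} (∑_{k≥0} a_{p^{α(p)+k}} χ(p)^k p^{−ks}) / (∑_{k≥0} a_{p^k} χ(p)^k p^{−ks})`,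
with `α(p)` the exponent of `p` in `d` and the denominators assumed nonzero. -/
theorem stmt10 (a : ℕ → ℂ) (ha1 : a 1 = 1)
    (hmul : ∀ m n : ℕ, Nat.gcd m n = 1 → a (m * n) = a m * a n)
    (hgrowth : ∀ ε : ℝ, 0 < ε → ∃ C : ℝ, ∀ n : ℕ, 1 ≤ n → ‖a n‖ ≤ C * (n : ℝ) ^ ε)
    (q : ℕ) (χ : DirichletCharacter ℂ q) (d : ℕ) (hd : 1 ≤ d)
    (s : ℂ) (hs : 1 < s.re)
    (hden : ∀ p ∈ d.primeFactors,
      (∑' k : ℕ, a (p ^ k) * χ (p : ZMod q) ^ k * (p : ℂ) ^ (-(k : ℂ) * s)) ≠ 0) :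
    ∑' n : ℕ, a (d * n) * χ (n : ZMod q) * (n : ℂ) ^ (-s) =
      (∏ p ∈ d.primeFactors,
        (∑' k : ℕ, a (p ^ (d.factorization p + k)) * χ (p : ZMod q) ^ k *
            (p : ℂ) ^ (-(k : ℂ) * s)) /
        (∑' k : ℕ, a (p ^ k) * χ (p : ZMod q) ^ k * (p : ℂ) ^ (-(k : ℂ) * s))) *
      ∑' n : ℕ, a n * χ (n : ZMod q) * (n : ℂ) ^ (-s) := by
  have hs0 : -s ≠ 0 := by
    intro h; rw [neg_eq_zero] at h; rw [h] at hs; norm_num at hs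
  have hP : ∀ p ∈ d.primeFactors, p.Prime := fun p hp => Nat.prime_of_mem_primeFactors hp
  have hconv : ∀ e : ℕ,
      (∑' u : {u : ℕ // 0 < u ∧ ∀ r ∈ (∅ : Finset ℕ), ¬ r ∣ u},
        a (e * (u : ℕ)) * χ ((u : ℕ) : ZMod q) * ((u : ℕ) : ℂ) ^ (-s))
      = ∑' n : ℕ, a (e * n) * χ (n : ZMod q) * (n : ℂ) ^ (-s) := by
    intro e
    refine tsum_subtype_eq_of_support_subset
      (s := {u : ℕ | 0 < u ∧ ∀ r ∈ (∅ : Finset ℕ), ¬ r ∣ u})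
      (f := fun n : ℕ => a (e * n) * χ (n : ZMod q) * (n : ℂ) ^ (-s)) fun n hn => ?_
    refine ⟨?_, by simp⟩
    rcases Nat.eq_zero_or_pos n with rfl | h
    · simp [Function.mem_support, Complex.zero_cpow hs0] at hn
    · exact h
  have key1 := stmt10_key a ha1 hmul hgrowth q χ s hs d.primeFactors ∅ hP
    (by simp) (Finset.disjoint_empty_right _) d hd Finset.Subset.rfl
  have key2 := stmt10_key a ha1 hmul hgrowth q χ s hs d.primeFactors ∅ hP
    (by simp) (Finset.disjoint_empty_right _) 1 one_pos (by simp)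
  rw [hconv d] at key1
  rw [hconv 1] at key2
  simp only [one_mul, Nat.factorization_one, Finsupp.coe_zero, Pi.zero_apply, zero_add,
    Finset.union_empty] at key1 key2
  rw [key1, key2, ← mul_assoc, ← Finset.prod_mul_distrib]
  congr 1
  exact Finset.prod_congr rfl fun p hp => (div_mul_cancel₀ _ (hden p hp)).symm
end
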